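/- Let R₁ ≤ R₂ ≤ ... ≤ Rₘ be real numbers in [-M_r, M_r] and let G(x) = (1/m)·#{i : Rᵢ ≤ x} be their empirical CDF. Let g : [0,1] → [0,1] be a function with g(0) = 0 and g(1) = 1. Then ∫_{-M_r}^{0} (g(1 - G(x)) - 1) dx + ∫_{0}^{M_r} g(1 - G(x)) dx = Σ_{i=1}^{m} Rᵢ · (g(1 - (i-1)/m) - g(1 - i/m)), where the Rᵢ on the right are in sorted (nondecreasing) order. -/

import Mathlib

open scoped BigOperators
open MeasureTheory

/-- The Choquet-integral DRM estimate based on the empirical CDF of `m` sorted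
samples equals the order-statistics expression. -/
theorem drm_empirical_order_statistics
    (m : ℕ) (hm : 1 ≤ m) (Mr : ℝ) (hMr : 0 < Mr)
    (R : Fin m → ℝ) (hmono : Monotone R)
    (hbound : ∀ i, R i ∈ Set.Icc (-Mr) Mr)
    (g : ℝ → ℝ) (hg0 : g 0 = 0) (hg1 : g 1 = 1)
    (G : ℝ → ℝ)
    (hG : ∀ x, G x = ((Finset.univ.filter (fun i : Fin m => R i ≤ x)).card : ℝ) / m) :
    (∫ x in (-Mr)..0, (g (1 - G x) - 1)) + ∫ x in (0:ℝ)..Mr, g (1 - G x)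
      = ∑ i : Fin m, R i *
          (g (1 - (i : ℝ) / m) - g (1 - ((i : ℝ) + 1) / m)) := by
  have hm0 : (m : ℝ) ≠ 0 := Nat.cast_ne_zero.mpr (by omega)
  set a : ℕ → ℝ := fun i =>
    if h : i = 0 then -Mr else if h2 : i ≤ m then R ⟨i - 1, by omega⟩ else Mr with ha
  have ha0 : a 0 = -Mr := by simp [ha]
  have haM : a (m + 1) = Mr := by simp [ha]
  have haR : ∀ i : ℕ, (h1 : 1 ≤ i) → (h2 : i ≤ m) → a i = R ⟨i - 1, by omega⟩ := by
    intro i h1 h2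
    simp only [ha]
    rw [dif_neg (by omega : ¬ i = 0), dif_pos h2]
  have hamono : ∀ i ≤ m, a i ≤ a (i + 1) := by
    intro i hi
    rcases Nat.eq_zero_or_pos i with rfl | hpos
    · rw [ha0, haR 1 le_rfl hm]
      exact (hbound _).1
    · rcases Nat.lt_or_ge i m with h | h
      · rw [haR i hpos hi, haR (i + 1) (by omega) (by omega)]
        exact hmono (Fin.mk_le_mk.mpr (by omega))
      · have him : i = m := le_antisymm hi h
        rw [him, haR m (by omega) le_rfl, haM]
        exact (hbound _).2
  -- the count of samples ≤ x on the open interval (a i, a (i+1)) is i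
  have hcount : ∀ i ≤ m, ∀ x ∈ Set.Ioo (a i) (a (i + 1)),
      (Finset.univ.filter (fun j : Fin m => R j ≤ x)).card = i := by
    intro i hi x hx
    have hfe : (Finset.univ.filter (fun j : Fin m => R j ≤ x))
        = Finset.univ.filter (fun j : Fin m => (j : ℕ) < i) := by
      ext j
      simp only [Finset.mem_filter, Finset.mem_univ, true_and]
      constructor
      · intro hj
        by_contra hji
        push_neg at hji
        have hij : a (i + 1) ≤ R j := by
          rcases Nat.lt_or_ge i m with h | h
          · rw [haR (i + 1) (by omega) (by omega)]
            exact hmono (Fin.mk_le_mk.mpr (by omega))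
          · exact absurd (lt_of_le_of_lt hji j.isLt) (by omega)
        exact absurd (lt_of_le_of_lt hj hx.2) (not_lt.mpr hij)
      · intro hj
        have hle : R j ≤ a i := by
          rw [haR i (by omega) hi]
          exact hmono (Fin.mk_le_mk.mpr (by omega))
        exact le_of_lt (lt_of_le_of_lt hle hx.1)
    rw [hfe]
    rcases Nat.lt_or_ge i m with h | h
    · have heq : Finset.univ.filter (fun j : Fin m => (j : ℕ) < i)
          = Finset.Iio (⟨i, h⟩ : Fin m) := by
        ext j; simp [Fin.lt_def]
      rw [heq, Fin.card_Iio]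
    · have him : i = m := le_antisymm hi h
      subst him
      rw [Finset.filter_true_of_mem (fun j _ => j.isLt)]
      simp
  -- a.e. equality with the constant on each piece
  have hae : ∀ i ≤ m, ∀ᵐ x, x ∈ Set.uIoc (a i) (a (i + 1)) →
      g (1 - G x) = g (1 - (i : ℝ) / m) := by
    intro i hi
    have h1 : Set.uIoc (a i) (a (i + 1)) = Set.Ioc (a i) (a (i + 1)) :=
      Set.uIoc_of_le (hamono i hi)
    have h2 : (volume : Measure ℝ) {(a (i + 1))} = 0 := measure_singleton _
    rw [ae_iff]
    refine measure_mono_null ?_ h2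
    intro x hx
    simp only [Set.mem_setOf_eq] at hx
    rw [Classical.not_imp] at hx
    obtain ⟨hx1, hx2⟩ := hx
    rw [h1] at hx1
    by_contra hne
    have hxo : x ∈ Set.Ioo (a i) (a (i + 1)) := by
      refine ⟨hx1.1, ?_⟩
      rcases lt_or_eq_of_le hx1.2 with h | h
      · exact h
      · exact absurd h (by simpa [Set.mem_singleton_iff] using hne)
    exact hx2 (by rw [hG x, hcount i hi x hxo])
  have hii : ∀ i ≤ m, IntervalIntegrable (fun x => g (1 - G x)) volume (a i) (a (i + 1)) := by
    intro i hi
    exact (intervalIntegrable_const (c := g (1 - (i : ℝ) / m))).congr_ae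
      (by filter_upwards [ae_restrict_mem measurableSet_uIoc,
            ae_restrict_of_ae (hae i hi)] with x hx h2
          exact (h2 hx).symm)
  have hint : ∀ i ≤ m, (∫ x in a i..a (i + 1), g (1 - G x))
      = g (1 - (i : ℝ) / m) * (a (i + 1) - a i) := by
    intro i hi
    rw [intervalIntegral.integral_congr_ae (hae i hi), intervalIntegral.integral_const,
      smul_eq_mul, mul_comm]
  -- total integral over [-Mr, Mr]
  have htot : (∫ x in (-Mr)..Mr, g (1 - G x))
      = ∑ i ∈ Finset.range (m + 1), g (1 - (i : ℝ) / m) * (a (i + 1) - a i) := by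
    rw [← ha0, ← haM, ← intervalIntegral.sum_integral_adjacent_intervals
      (fun k hk => hii k (by omega))]
    exact Finset.sum_congr rfl fun i hi => hint i
      (Nat.lt_succ_iff.mp (Finset.mem_range.mp hi))
  -- integrability on the whole interval and the two halves
  have hIIall : IntervalIntegrable (fun x => g (1 - G x)) volume (-Mr) Mr := by
    rw [← ha0, ← haM]
    exact IntervalIntegrable.trans_iterate fun k hk => hii k (by omega)
  have hI1 : IntervalIntegrable (fun x => g (1 - G x)) volume (-Mr) 0 :=
    hIIall.mono_set (by
      rw [Set.uIcc_of_le (by linarith), Set.uIcc_of_le (by linarith)]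
      exact Set.Icc_subset_Icc le_rfl (le_of_lt hMr))
  have hI2 : IntervalIntegrable (fun x => g (1 - G x)) volume 0 Mr :=
    hIIall.mono_set (by
      rw [Set.uIcc_of_le (by linarith), Set.uIcc_of_le (by linarith)]
      exact Set.Icc_subset_Icc (by linarith) le_rfl)
  -- LHS = total integral - Mr
  have hLHS : (∫ x in (-Mr)..0, (g (1 - G x) - 1)) + (∫ x in (0:ℝ)..Mr, g (1 - G x))
      = (∫ x in (-Mr)..Mr, g (1 - G x)) - Mr := by
    rw [intervalIntegral.integral_sub hI1 intervalIntegrable_const,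
      intervalIntegral.integral_const, ← intervalIntegral.integral_add_adjacent_intervals hI1 hI2]
    simp [smul_eq_mul]
    ring
  -- Abel summation
  have habel : ∑ i ∈ Finset.range (m + 1), g (1 - (i : ℝ) / m) * (a (i + 1) - a i)
      = (∑ i : Fin m, R i * (g (1 - (i : ℝ) / m) - g (1 - ((i : ℝ) + 1) / m))) + Mr := by
    set c : ℕ → ℝ := fun i => g (1 - (i : ℝ) / m) with hc
    have hcm' : c m = 0 := by rw [hc]; simp [div_self hm0, hg0]
    have hc0' : c 0 = 1 := by rw [hc]; simpa using hg1
    have hS : ∑ i ∈ Finset.range (m + 1), c i * (a (i + 1) - a i)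
        = (∑ i ∈ Finset.range m, (c i - c (i + 1)) * a (i + 1))
          + (c m * a (m + 1) - c 0 * a 0) := by
      have h1 : ∑ i ∈ Finset.range (m + 1), c i * (a (i + 1) - a i)
          = (∑ i ∈ Finset.range (m + 1), c i * a (i + 1))
            - ∑ i ∈ Finset.range (m + 1), c i * a i := by
        rw [← Finset.sum_sub_distrib]
        exact Finset.sum_congr rfl fun i _ => by ring
      have h3 : ∑ i ∈ Finset.range m, (c i - c (i + 1)) * a (i + 1)
          = (∑ i ∈ Finset.range m, c i * a (i + 1))
            - ∑ i ∈ Finset.range m, c (i + 1) * a (i + 1) := by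
        rw [← Finset.sum_sub_distrib]
        exact Finset.sum_congr rfl fun i _ => by ring
      rw [h1, Finset.sum_range_succ (fun i => c i * a (i + 1)),
        Finset.sum_range_succ' (fun i => c i * a i), h3]
      ring
    have hsum : ∑ i ∈ Finset.range m, (c i - c (i + 1)) * a (i + 1)
        = ∑ i : Fin m, R i * (g (1 - (i : ℝ) / m) - g (1 - ((i : ℝ) + 1) / m)) := by
      rw [Finset.sum_range (fun i => (c i - c (i + 1)) * a (i + 1))]
      refine Finset.sum_congr rfl fun i _ => ?_
      rw [haR ((i : ℕ) + 1) (by omega) (by omega)]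
      have hR : R ⟨(i : ℕ) + 1 - 1, by omega⟩ = R i := by
        congr 1
      rw [hR, hc]
      push_cast
      ring
    rw [hS, hsum, hcm', hc0', haM, ha0]
    ring
  rw [hLHS, htot, habel]
  ring
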